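/- arXiv:2104.13910 — 3 statements merged into one kernel-verified Lean document; each statement's English description precedes it below -/
import Mathlib

section
/- No subsequence set for 1-genericity is hyperimmune: if I ⊆ ℕ is hyperimmune, then there is a 1-generic G with I ⊆ G, and hence G_I = ℕ is not 1-generic. -/
open Classical in
/-- Characteristic sequence of a set of naturals. -/
noncomputable def chi (G : Set ℕ) : ℕ → Bool := fun n => decide (n ∈ G)

/-- Initial segment of length `k` of the characteristic sequence of `G`. -/
noncomputable def seg (G : Set ℕ) (k : ℕ) : List Bool := (List.range k).map (chi G)

/-- `G` is 1-generic: for every c.e. set `W` of binary strings, some initial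
segment of `G` lies in `W` or has no extension in `W`. -/
def OneGeneric (G : Set ℕ) : Prop :=
  ∀ W : Set (List Bool), REPred (· ∈ W) →
    ∃ k, seg G k ∈ W ∨ ∀ τ : List Bool, seg G k <+: τ → τ ∉ W

/-- A set of strings is dense if every string has an extension in it. -/
def DenseStrings (W : Set (List Bool)) : Prop := ∀ σ : List Bool, ∃ τ ∈ W, σ <+: τ

/-- `G` is weak-1-generic: `G` meets every dense c.e. set of strings. -/
def WeakOneGeneric (G : Set ℕ) : Prop :=
  ∀ W : Set (List Bool), REPred (· ∈ W) → DenseStrings W → ∃ k, seg G k ∈ W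

/-- Principal function of `I` (increasing enumeration). -/
noncomputable def princ (I : Set ℕ) : ℕ → ℕ := Nat.nth (· ∈ I)

/-- `I` is hyperimmune: infinite and its principal function is majorized by
no computable function. -/
def Hyperimmune (I : Set ℕ) : Prop :=
  I.Infinite ∧ ∀ f : ℕ → ℕ, Computable f → ∃ n, f n < princ I n

/-- The `I`-subsequence `A_I` of `A`, as a set: `A_I(n) = A(P_I(n))`. -/
def subseq (A I : Set ℕ) : Set ℕ := {n | princ I n ∈ A}

/-- The `I`-subsequence of an infinite binary sequence. -/
noncomputable def subseqFun (X : ℕ → Bool) (I : Set ℕ) : ℕ → Bool :=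
  fun n => X (princ I n)

def ComputableSet (I : Set ℕ) : Prop := ComputablePred (· ∈ I)

/-- Partial functions recursive in an oracle `O`. -/
inductive RecursiveInOracle (O : ℕ →. ℕ) : (ℕ →. ℕ) → Prop
  | zero : RecursiveInOracle O (pure 0)
  | succ : RecursiveInOracle O ↑Nat.succ
  | left : RecursiveInOracle O ↑fun n : ℕ => n.unpair.1
  | right : RecursiveInOracle O ↑fun n : ℕ => n.unpair.2
  | oracle : RecursiveInOracle O O
  | pair {f g} : RecursiveInOracle O f → RecursiveInOracle O g →
      RecursiveInOracle O fun n => Nat.pair <$> f n <*> g n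
  | comp {f g} : RecursiveInOracle O f → RecursiveInOracle O g →
      RecursiveInOracle O fun n => g n >>= f
  | prec {f g} : RecursiveInOracle O f → RecursiveInOracle O g →
      RecursiveInOracle O (Nat.unpaired fun a n =>
        n.rec (f a) fun y IH => do { let i ← IH; g (Nat.pair a (Nat.pair y i)) })
  | rfind {f} : RecursiveInOracle O f →
      RecursiveInOracle O fun a => Nat.rfind fun n => (fun m => m = 0) <$> f (Nat.pair a n)

open Classical in
noncomputable def charFun (A : Set ℕ) : ℕ →. ℕ :=
  fun n => Part.some (if n ∈ A then 1 else 0)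

/-- `A` Turing-computes `B`. -/
def TuringComputes (A B : Set ℕ) : Prop := RecursiveInOracle (charFun A) (charFun B)

/-- The halting problem `∅′`. -/
def HaltingProblem : Set ℕ :=
  {n | ((Denumerable.ofNat Nat.Partrec.Code n).eval n).Dom}

/-- `I` is wild. -/
def Wild (I : Set ℕ) : Prop :=
  ¬ComputableSet I ∧ ∃ f : ℕ → ℕ, Computable f ∧ StrictMono f ∧
    (∀ n, (I ∩ Set.Ioo (f n) (f (n + 1))).Nonempty) ∧
    ¬Computable fun n => (I ∩ Set.Ioo (f n) (f (n + 1))).ncard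

/-- `I` is tame. -/
def Tame (I : Set ℕ) : Prop :=
  ¬ComputableSet I ∧ ∃ f : ℕ → ℕ, Computable f ∧ StrictMono f ∧
    (∀ n, (I ∩ Set.Ioo (f n) (f (n + 1))).Nonempty) ∧
    Computable fun n => (I ∩ Set.Ioo (f n) (f (n + 1))).ncard

/-- The string `ρ` meets `S`: some initial segment of `ρ` is in `S`. -/
def MeetsStr (ρ : List Bool) (S : Set (List Bool)) : Prop := ∃ σ ∈ S, σ <+: ρ

/-- The sequence `X` meets `S`: some initial segment of `X` is in `S`. -/
def MeetsSeq (X : ℕ → Bool) (S : Set (List Bool)) : Prop :=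
  ∃ k, (List.range k).map X ∈ S

/-- `l, t` are suitable for `S`. -/
def SuitableFor (S : Set (List Bool)) (l : ℕ → ℕ) (t : ℕ → List Bool) : Prop :=
  l 0 = 0 ∧ (∀ n, l (n + 1) = l n + (t n).length) ∧
    ∀ (X : ℕ → Bool) (n m : ℕ), m ≤ l n →
      MeetsStr ((List.range m).map X ++ t n) S

/-- The collection `D` has property `(*)`. -/
def HasStar (D : ℕ → Set (List Bool)) : Prop :=
  ∀ i, ∃ l t, SuitableFor (D i) l t ∧ ∀ n, ∃ j, D j =
    {s | ∃ (σ τ ρ : List Bool) (m : ℕ), m > n ∧ σ.length = l (2 * m) ∧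
      τ = t (2 * m) ∧ ρ = t (2 * m + 1) ∧ s = σ ++ τ ++ ρ}

/-- The `e`-th c.e. set of binary strings. -/
def ceSet (e : ℕ) : Set (List Bool) :=
  {σ | ((Denumerable.ofNat Nat.Partrec.Code e).eval (Encodable.encode σ)).Dom}

open Classical in
/-- The `I`-subsequence of a finite string. -/
noncomputable def subseqStr (τ : List Bool) (I : Set ℕ) : List Bool :=
  (List.range τ.length).filterMap fun k => if k ∈ I then τ[k]? else none

namespace HypAux

open Nat.Partrec (Code)
open Nat.Partrec.Code

/-- `σ` is `I`-respecting: positions in `I` carry `true`. -/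
def Ok (I : Set ℕ) (σ : List Bool) : Prop :=
  ∀ m, m ∈ I → m < σ.length → σ.getD m false = true

theorem ok_nil (I : Set ℕ) : Ok I [] := by intro m _ h; simp at h

theorem prefix_getD {σ τ : List Bool} (h : σ <+: τ) {m : ℕ} (hm : m < σ.length) :
    τ.getD m false = σ.getD m false := by
  obtain ⟨ρ, rfl⟩ := h
  exact List.getD_append _ _ _ _ hm

theorem getD_true_lt {l : List Bool} {n : ℕ} (h : l.getD n false = true) : n < l.length := by
  by_contra hn
  rw [List.getD_eq_default _ _ (le_of_not_gt hn)] at h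
  exact Bool.false_ne_true h

theorem ok_append_replicate {I : Set ℕ} {σ : List Bool} (h : Ok I σ) (a : ℕ) :
    Ok I (σ ++ List.replicate a true) := by
  intro m hm hlt
  rcases lt_or_ge m σ.length with hc | hc
  · rw [List.getD_append _ _ _ _ hc]; exact h m hm hc
  · rw [List.getD_append_right _ _ _ _ hc]
    have hlt' : m - σ.length < a := by
      simp only [List.length_append, List.length_replicate] at hlt; omega
    rw [List.getD_eq_getElem _ _ (by simpa using hlt')]
    simp

theorem ok_concat_true {I : Set ℕ} {σ : List Bool} (h : Ok I σ) :
    Ok I (σ ++ [true]) := by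
  have := ok_append_replicate h 1
  simpa using this

theorem repred_ceSet {W : Set (List Bool)} (h : REPred (· ∈ W)) :
    ∃ e, ∀ τ, τ ∈ W ↔ τ ∈ ceSet e := by
  obtain ⟨c, hc⟩ := Nat.Partrec.Code.exists_code.1 h
  refine ⟨Encodable.encode c, fun τ => ?_⟩
  have heval : eval c (Encodable.encode τ)
      = (Part.assert (τ ∈ W) fun _ => Part.some ()).map Encodable.encode := by
    rw [hc]; simp [Encodable.encodek]
  simp only [ceSet, Set.mem_setOf_eq, Denumerable.ofNat_encode, heval]
  simp [Part.assert]

/-- The computable-majorant argument: if requirement `e` can be neither met nor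
avoided above `σ`, we get a computable function strictly above `princ I`. -/
theorem majorant (I : Set ℕ) (hInf : I.Infinite) (e : ℕ) (σ : List Bool) (hσ : Ok I σ)
    (hmeet : ∀ τ, σ <+: τ → Ok I τ → τ ∉ ceSet e)
    (havoid : ∀ σ', σ <+: σ' → Ok I σ' → ∃ τ, σ' <+: τ ∧ τ ∈ ceSet e) :
    ∃ h : ℕ → ℕ, Computable h ∧ ∀ n, princ I n < h n := by
  classical
  set c : Code := Denumerable.ofNat Code e with hcdef
  -- the search predicate
  set q : ℕ → ℕ → Bool := fun a k =>
    ((Encodable.decode (α := List Bool) k.unpair.1).map fun ρ =>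
      (evaln k.unpair.2 c (Encodable.encode (σ ++ List.replicate a true ++ ρ))).isSome).getD
      false with hqdef
  have ex : ∀ a, ∃ k, q a k = true := by
    intro a
    have hok : Ok I (σ ++ List.replicate a true) := ok_append_replicate hσ a
    obtain ⟨τ, hpre, hτ⟩ := havoid _ (List.prefix_append _ _) hok
    obtain ⟨ρ, rfl⟩ := hpre
    obtain ⟨v, hv⟩ := Part.dom_iff_mem.1 hτ
    obtain ⟨s, hs⟩ := evaln_complete.1 hv
    refine ⟨Nat.pair (Encodable.encode ρ) s, ?_⟩
    simp only [hqdef, Nat.unpair_pair, Encodable.encodek, Option.map_some, Option.getD_some]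
    simp only [List.append_assoc] at hs ⊢
    exact Option.isSome_iff_exists.2 ⟨v, hs⟩
  set F : ℕ → ℕ := fun a =>
    σ.length + a +
      ((Encodable.decode (α := List Bool) ((Nat.find (ex a)).unpair.1)).getD []).length
    with hFdef
  have specF : ∀ a, ∃ m, m ∈ I ∧ a ≤ m ∧ m < F a := by
    intro a
    have hsp := Nat.find_spec (ex a)
    set k := Nat.find (ex a) with hk
    rcases hd : (Encodable.decode (α := List Bool) k.unpair.1) with _ | ρ
    · simp only [hqdef, hd] at hsp; simp at hsp
    have hev : (evaln k.unpair.2 c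
        (Encodable.encode (σ ++ List.replicate a true ++ ρ))).isSome = true := by
      simp only [hqdef, hd] at hsp; simpa using hsp
    obtain ⟨v, hv⟩ := Option.isSome_iff_exists.1 hev
    have hmemW : (σ ++ List.replicate a true ++ ρ) ∈ ceSet e := by
      have := evaln_sound (c := c) hv
      exact Part.dom_iff_mem.2 ⟨v, this⟩
    set τ := σ ++ List.replicate a true ++ ρ with hτdef
    have hpre : σ <+: τ := by
      rw [hτdef, List.append_assoc]; exact List.prefix_append _ _
    have hnok : ¬ Ok I τ := fun hok => hmeet τ hpre hok hmemW
    simp only [Ok, not_forall] at hnok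
    obtain ⟨m, hmI, hmlt, hne⟩ := hnok
    refine ⟨m, hmI, ?_, ?_⟩
    · by_contra hma
      push_neg at hma
      have hm2 : m < (σ ++ List.replicate a true).length := by
        simp only [List.length_append, List.length_replicate]; omega
      have := prefix_getD (σ := σ ++ List.replicate a true) (τ := τ)
        (by rw [hτdef]; exact List.prefix_append _ _) hm2
      rw [this] at hne
      exact hne (ok_append_replicate hσ a m hmI hm2)
    · have : τ.length = F a := by
        rw [hFdef]; simp only [hτdef, List.length_append, List.length_replicate]
        rw [hd]; simp [Nat.add_assoc]
      omega
  -- computability of F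
  have hq2 : Computable₂ q := by
    have hrep : Primrec fun a : ℕ => List.replicate a true := by
      have : Primrec fun a : ℕ => (List.range a).map fun _ => true :=
        Primrec.list_map Primrec.list_range ((Primrec.const true).comp Primrec.fst).to₂
      refine this.of_eq fun a => ?_
      simp [List.map_const']
    have henc : Primrec fun p : (ℕ × ℕ) × List Bool =>
        Encodable.encode (σ ++ List.replicate p.1.1 true ++ p.2) :=
      Primrec.encode.comp
        (Primrec.list_append.comp
          (Primrec.list_append.comp (Primrec.const σ) (hrep.comp (Primrec.fst.comp Primrec.fst)))
          Primrec.snd)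
    have hev : Primrec fun p : (ℕ × ℕ) × List Bool =>
        (evaln p.1.2.unpair.2 c
          (Encodable.encode (σ ++ List.replicate p.1.1 true ++ p.2))).isSome := by
      have harg : Primrec fun p : (ℕ × ℕ) × List Bool =>
          ((p.1.2.unpair.2, c), Encodable.encode (σ ++ List.replicate p.1.1 true ++ p.2)) :=
        ((((Primrec.snd.comp Primrec.unpair).comp (Primrec.snd.comp Primrec.fst)).pair
          (Primrec.const c)).pair henc)
      exact Primrec.option_isSome.comp (primrec_evaln.comp harg)
    have hdec : Computable fun p : ℕ × ℕ =>
        (Encodable.decode (α := List Bool) p.2.unpair.1) :=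
      Computable.decode.comp ((Primrec.fst.comp Primrec.unpair).comp Primrec.snd).to_comp
    have hmap : Computable fun p : ℕ × ℕ =>
        ((Encodable.decode (α := List Bool) p.2.unpair.1).map fun ρ =>
          (evaln p.2.unpair.2 c (Encodable.encode (σ ++ List.replicate p.1 true ++ ρ))).isSome) :=
      Computable.option_map hdec hev.to_comp.to₂
    exact Computable.option_getD hmap (Computable.const false)
  have hfind : Computable fun a => Nat.find (ex a) := by
    have pr : Partrec fun a : ℕ => Nat.rfind fun n => ((q a n : Bool) : Part Bool) :=
      Partrec.rfind hq2.partrec₂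
    apply pr.of_eq_tot
    intro a
    obtain ⟨n, hn, hle⟩ := Nat.rfind_min' (p := q a) (Nat.find_spec (ex a))
    have h1 : q a n = true := by simpa using Nat.rfind_spec hn
    have h2 : n = Nat.find (ex a) :=
      le_antisymm hle (Nat.find_min' (ex a) h1)
    exact h2 ▸ hn
  have hF : Computable F := by
    have h1 : Computable fun a : ℕ =>
        ((Encodable.decode (α := List Bool) ((Nat.find (ex a)).unpair.1)).getD []).length :=
      Primrec.list_length.to_comp.comp
        (Computable.option_getD
          (Computable.decode.comp ((Primrec.fst.comp Primrec.unpair).to_comp.comp hfind))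
          (Computable.const []))
    have h2 : Computable fun a : ℕ => σ.length + a :=
      (Primrec.nat_add.comp (Primrec.const σ.length) Primrec.id).to_comp
    exact (Primrec.nat_add.to_comp.comp h2 h1).of_eq fun a => rfl
  -- iterate F
  set h : ℕ → ℕ := fun k => Nat.rec (motive := fun _ => ℕ) (F 0) (fun _ ih => F ih) k with hhdef
  have hh : Computable h := by
    have := Computable.nat_rec (f := fun a : ℕ => a) (g := fun _ : ℕ => F 0)
      (h := fun (_ : ℕ) (p : ℕ × ℕ) => F p.2) Computable.id (Computable.const (F 0))
      ((hF.comp (Computable.snd.comp Computable.snd)).to₂)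
    exact this.of_eq fun a => rfl
  have hInf' : (setOf fun n => n ∈ I).Infinite := by
    exact hInf
  have specH : ∀ k, ∃ m, m ∈ I ∧ princ I k ≤ m ∧ m < h k := by
    intro k
    induction k with
    | zero =>
      obtain ⟨m, hmI, _, hmlt⟩ := specF 0
      refine ⟨m, hmI, ?_, hmlt⟩
      rw [princ, Nat.nth_zero]
      exact Nat.sInf_le hmI
    | succ k ih =>
      obtain ⟨m, hmI, hnle, hmlt⟩ := ih
      obtain ⟨m', hm'I, hle', hlt'⟩ := specF (h k)
      refine ⟨m', hm'I, ?_, hlt'⟩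
      have hmm' : Nat.nth (· ∈ I) k < m' := lt_of_le_of_lt hnle (lt_of_lt_of_le hmlt hle')
      have hm'eq : Nat.nth (· ∈ I) (Nat.count (· ∈ I) m') = m' := Nat.nth_count hm'I
      have hcnt : k < Nat.count (· ∈ I) m' := by
        by_contra hcon
        push_neg at hcon
        have := (Nat.nth_strictMono hInf').monotone hcon
        rw [hm'eq] at this
        omega
      have := (Nat.nth_strictMono hInf').monotone hcnt
      rw [hm'eq] at this
      exact this
  exact ⟨h, hh, fun n => by obtain ⟨m, _, h1, h2⟩ := specH n; omega⟩

theorem exists_ext {I : Set ℕ} (hI : Hyperimmune I) (e : ℕ) (σ : List Bool) (hσ : Ok I σ) :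
    ∃ σ', σ <+: σ' ∧ Ok I σ' ∧ (σ' ∈ ceSet e ∨ ∀ τ, σ' <+: τ → τ ∉ ceSet e) := by
  by_cases hmeet : ∃ τ, σ <+: τ ∧ Ok I τ ∧ τ ∈ ceSet e
  · obtain ⟨τ, h1, h2, h3⟩ := hmeet; exact ⟨τ, h1, h2, Or.inl h3⟩
  by_cases havoid : ∃ σ', σ <+: σ' ∧ Ok I σ' ∧ ∀ τ, σ' <+: τ → τ ∉ ceSet e
  · obtain ⟨σ', h1, h2, h3⟩ := havoid; exact ⟨σ', h1, h2, Or.inr h3⟩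
  exfalso
  push_neg at hmeet havoid
  obtain ⟨h, hcomp, hmaj⟩ := majorant I hI.1 e σ hσ
    (fun τ h1 h2 => hmeet τ h1 h2)
    (fun σ' h1 h2 => by
      obtain ⟨τ, hτ1, hτ2⟩ := havoid σ' h1 h2
      exact ⟨τ, hτ1, hτ2⟩)
  obtain ⟨n, hn⟩ := hI.2 h hcomp
  exact absurd (hmaj n) (by omega)

/-- The tower of finite strings approximating the generic `G`. -/
noncomputable def tower (I : Set ℕ) (hI : Hyperimmune I) : ℕ → {σ : List Bool // Ok I σ}
  | 0 => ⟨[], ok_nil I⟩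
  | n + 1 =>
    let p := tower I hI n
    ⟨(exists_ext hI n p.1 p.2).choose ++ [true],
      ok_concat_true (exists_ext hI n p.1 p.2).choose_spec.2.1⟩

theorem tower_mono (I : Set ℕ) (hI : Hyperimmune I) (n : ℕ) :
    (tower I hI n).1 <+: (tower I hI (n + 1)).1 := by
  show (tower I hI n).1 <+: (exists_ext hI n (tower I hI n).1 (tower I hI n).2).choose ++ [true]
  exact (exists_ext hI n (tower I hI n).1 (tower I hI n).2).choose_spec.1.trans
    (List.prefix_append _ _)

theorem tower_chain (I : Set ℕ) (hI : Hyperimmune I) {a b : ℕ} (h : a ≤ b) :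
    (tower I hI a).1 <+: (tower I hI b).1 := by
  induction b with
  | zero => rw [Nat.le_zero.1 h]
  | succ b ih =>
    rcases Nat.lt_or_ge a (b + 1) with hc | hc
    · exact (ih (Nat.lt_succ_iff.1 hc)).trans (tower_mono I hI b)
    · rw [le_antisymm h hc]

theorem tower_length (I : Set ℕ) (hI : Hyperimmune I) (n : ℕ) :
    n ≤ (tower I hI n).1.length := by
  induction n with
  | zero => simp
  | succ n ih =>
    have h1 := (tower_mono I hI n).length_le
    have h2 : (tower I hI (n + 1)).1.length =
        (exists_ext hI n (tower I hI n).1 (tower I hI n).2).choose.length + 1 := by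
      show ((exists_ext hI n (tower I hI n).1 (tower I hI n).2).choose ++ [true]).length = _
      simp
    have h3 : (tower I hI n).1.length ≤
        (exists_ext hI n (tower I hI n).1 (tower I hI n).2).choose.length :=
      (exists_ext hI n (tower I hI n).1 (tower I hI n).2).choose_spec.1.length_le
    omega

/-- The generic set determined by the tower. -/
def Glim (I : Set ℕ) (hI : Hyperimmune I) : Set ℕ :=
  {n | ∃ e, (tower I hI e).1.getD n false = true}

theorem chi_Glim (I : Set ℕ) (hI : Hyperimmune I) {e n : ℕ}
    (h : n < (tower I hI e).1.length) :
    chi (Glim I hI) n = (tower I hI e).1.getD n false := by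
  classical
  unfold chi
  by_cases hg : n ∈ Glim I hI
  · obtain ⟨e', he'⟩ := id hg
    have hlt' : n < (tower I hI e').1.length := getD_true_lt he'
    have heq : (tower I hI e).1.getD n false = true := by
      rcases le_total e e' with hc | hc
      · rw [prefix_getD (tower_chain I hI hc) h] at he'; exact he'
      · rw [prefix_getD (tower_chain I hI hc) hlt']; exact he'
    rw [heq]; simp [hg]
  · have heq : (tower I hI e).1.getD n false = false := by
      by_contra hne
      exact hg ⟨e, Bool.ne_false_iff.1 hne⟩
    rw [heq]; simp [hg]

theorem seg_Glim (I : Set ℕ) (hI : Hyperimmune I) {e k : ℕ}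
    (h : k ≤ (tower I hI e).1.length) :
    seg (Glim I hI) k = (tower I hI e).1.take k := by
  apply List.ext_getElem
  · simp [seg, h]
  · intro i h1 h2
    have hik : i < k := by simpa [seg] using h1
    have hil : i < (tower I hI e).1.length := lt_of_lt_of_le hik h
    simp only [seg, List.getElem_map, List.getElem_range, List.getElem_take]
    rw [chi_Glim I hI hil, List.getD_eq_getElem _ _ hil]

theorem oneGeneric_Glim (I : Set ℕ) (hI : Hyperimmune I) : OneGeneric (Glim I hI) := by
  intro W hW
  obtain ⟨e, hWe⟩ := repred_ceSet hW
  set σ' := (exists_ext hI e (tower I hI e).1 (tower I hI e).2).choose with hσ'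
  have hspec := (exists_ext hI e (tower I hI e).1 (tower I hI e).2).choose_spec
  have hpre : σ' <+: (tower I hI (e + 1)).1 := by
    show σ' <+: σ' ++ [true]
    exact List.prefix_append _ _
  have hlen : σ'.length ≤ (tower I hI (e + 1)).1.length := hpre.length_le
  have hseg : seg (Glim I hI) σ'.length = σ' := by
    rw [seg_Glim I hI hlen]
    obtain ⟨ρ, hρ⟩ := hpre
    rw [← hρ, List.take_left]
  refine ⟨σ'.length, ?_⟩
  rcases hspec.2.2 with hc | hc
  · exact Or.inl (by rw [hseg]; exact (hWe σ').2 hc)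
  · refine Or.inr fun τ hτ hτW => ?_
    rw [hseg] at hτ
    exact hc τ hτ ((hWe τ).1 hτW)

theorem subset_Glim (I : Set ℕ) (hI : Hyperimmune I) : I ⊆ Glim I hI := by
  intro n hn
  have h1 : n < (tower I hI (n + 1)).1.length :=
    lt_of_lt_of_le (Nat.lt_succ_self n) (tower_length I hI (n + 1))
  exact ⟨n + 1, (tower I hI (n + 1)).2 n hn h1⟩

/-- The witnessing c.e. set: strings that are not all-`true`. -/
theorem not_oneGeneric_univ : ¬ OneGeneric (Set.univ : Set ℕ) := by
  intro h
  classical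
  set W : Set (List Bool) := {τ | τ ≠ List.replicate τ.length true} with hWdef
  have hre : REPred (· ∈ W) := by
    apply ComputablePred.to_re
    refine ⟨fun τ => instDecidableNot, ?_⟩
    have h1 : Primrec fun τ : List Bool => List.replicate τ.length true := by
      have : Primrec fun τ : List Bool => τ.map fun _ => true :=
        Primrec.list_map Primrec.id ((Primrec.const true).comp Primrec.fst).to₂
      exact this.of_eq fun τ => by simp [List.map_const']
    have h2 : Primrec fun τ : List Bool => decide (τ = List.replicate τ.length true) :=
      (Primrec.eq.comp Primrec.id h1).decide
    exact (Primrec.not.comp h2).to_comp.of_eq fun τ => by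
      simp [hWdef]
  obtain ⟨k, hk⟩ := h W hre
  have hseg : seg (Set.univ : Set ℕ) k = List.replicate k true := by
    apply List.ext_getElem
    · simp [seg]
    · intro i h1 h2
      simp [seg, chi]
  rcases hk with hc | hc
  · rw [hseg] at hc
    exact hc (by simp)
  · refine hc (List.replicate k true ++ [false]) ?_ ?_
    · rw [hseg]; exact List.prefix_append _ _
    · intro hcon
      have : ((List.replicate k true ++ [false]).getLast?) = some false :=
        List.getLast?_concat
      rw [hcon] at this
      have hlen : (List.replicate k true ++ [false]).length = k + 1 := by simp
      rw [hlen] at this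
      rw [List.replicate_succ'] at this
      rw [List.getLast?_concat] at this
      simp at this

end HypAux

theorem hyperimmune_not_subsequenceSet (I : Set ℕ) (hI : Hyperimmune I) :
    ∃ G : Set ℕ, OneGeneric G ∧ I ⊆ G ∧ subseq G I = Set.univ ∧
      ¬ OneGeneric (subseq G I) := by
  have huniv : subseq (HypAux.Glim I hI) I = Set.univ := by
    ext n
    simp only [subseq, Set.mem_setOf_eq, Set.mem_univ, iff_true]
    apply HypAux.subset_Glim I hI
    have hInf' : (setOf fun n => n ∈ I).Infinite := by
      exact hI.1
    simpa [princ] using Nat.nth_mem_of_infinite hInf' n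
  exact ⟨HypAux.Glim I hI, HypAux.oneGeneric_Glim I hI, HypAux.subset_Glim I hI, huniv,
    huniv ▸ HypAux.not_oneGeneric_univ⟩
end

section
/- Suppose D = (S_i)_{i∈ω} is a countable collection of dense sets of binary strings having property (*). Then there exists a non-computable set I ⊆ ℕ such that for every X ∈ 2^ω meeting every S_i, the subsequence X_I also meets every S_i. -/
open Classical in
/-- End of the block-pair of `L` containing `x` (or `x` if none). -/
noncomputable def Bnd (L : ℕ → ℕ) (x : ℕ) : ℕ :=
  if h : ∃ m, x < L (2 * m + 2) then L (2 * Nat.find h + 2) else x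

lemma Bnd_eq {L : ℕ → ℕ} (hL : Monotone L) {m x : ℕ}
    (h1 : L (2 * m) ≤ x) (h2 : x < L (2 * m + 2)) : Bnd L x = L (2 * m + 2) := by
  classical
  have hex : ∃ m, x < L (2 * m + 2) := ⟨m, h2⟩
  have hfind : Nat.find hex = m := by
    have hle : Nat.find hex ≤ m := Nat.find_le h2
    rcases lt_or_eq_of_le hle with h | h
    · exact absurd (Nat.find_spec hex)
        (not_lt.2 (le_trans (hL (by omega : 2 * Nat.find hex + 2 ≤ 2 * m)) h1))
    · exact h
  rw [Bnd, dif_pos hex, hfind]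

lemma Bnd_mono {L : ℕ → ℕ} (hL : Monotone L) : Monotone (Bnd L) := by
  classical
  intro x y hxy
  by_cases hx : ∃ m, x < L (2 * m + 2)
  · by_cases hy : ∃ m, y < L (2 * m + 2)
    · rw [Bnd, dif_pos hx, Bnd, dif_pos hy]
      exact hL (by
        have : Nat.find hx ≤ Nat.find hy :=
          Nat.find_mono (fun m h => lt_of_le_of_lt hxy h)
        omega)
    · rw [Bnd, dif_pos hx, Bnd, dif_neg hy]
      push_neg at hy
      exact hy _
  · have hy : ¬∃ m, y < L (2 * m + 2) := by
      rintro ⟨m, hm⟩; exact hx ⟨m, lt_of_le_of_lt hxy hm⟩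
    rw [Bnd, dif_neg hx, Bnd, dif_neg hy]; exact hxy

noncomputable def nseq (L : ℕ → ℕ → ℕ) : ℕ → ℕ
  | 0 => 0
  | e + 1 => 1 + max (nseq L e) ((Finset.range (e + 2)).sup fun i => Bnd (L i) (nseq L e))

lemma nseq_strictMono (L : ℕ → ℕ → ℕ) : StrictMono (nseq L) :=
  strictMono_nat_of_lt_succ (fun e => by
    show nseq L e < 1 + max (nseq L e) _
    omega)

lemma nseq_bnd {L : ℕ → ℕ → ℕ} (hL : ∀ i, Monotone (L i)) {i e e' : ℕ}
    (hi : i ≤ e') (hee : e < e') : Bnd (L i) (nseq L e) < nseq L e' := by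
  rcases e' with _ | e''
  · omega
  · have h2 : Bnd (L i) (nseq L e'') ≤
        (Finset.range (e'' + 2)).sup fun i => Bnd (L i) (nseq L e'') := by
      exact Finset.le_sup (f := fun i => Bnd (L i) (nseq L e'')) (Finset.mem_range.2 (by omega))
    have h1 : Bnd (L i) (nseq L e'') < nseq L (e'' + 1) := by
      show _ < 1 + max (nseq L e'') _
      omega
    exact lt_of_le_of_lt
      (Bnd_mono (hL i) ((nseq_strictMono L).monotone (by omega : e ≤ e''))) h1

theorem hasStar_subsequenceSet (D : ℕ → Set (List Bool))
    (hD : ∀ i, DenseStrings (D i)) (hstar : HasStar D) :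
    ∃ I : Set ℕ, ¬ ComputableSet I ∧
      ∀ X : ℕ → Bool, (∀ i, MeetsSeq X (D i)) →
        ∀ i, MeetsSeq (subseqFun X I) (D i) := by
  classical
  choose L T hsuit hT using hstar
  have hLmono : ∀ i, Monotone (L i) := fun i =>
    monotone_nat_of_le_succ fun n => by
      rw [(hsuit i).2.1 n]; exact Nat.le_add_right _ _
  set J : Set ℕ := {x | ∃ e, x = nseq L e ∧
    (Denumerable.ofNat Nat.Partrec.Code e).eval x = Part.some 1} with hJdef
  refine ⟨{x | x ∉ J}, ?_, ?_⟩
  · -- non-computability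
    rintro ⟨inst, hf⟩
    have hg : Computable fun a : ℕ => (Encodable.encode (decide (a ∈ {x | x ∉ J})) : ℕ) :=
      Computable.encode.comp hf
    obtain ⟨cd, hcd⟩ := Nat.Partrec.Code.exists_code.1 (Partrec.nat_iff.1 hg.partrec)
    set x := nseq L (Encodable.encode cd) with hxdef
    have hofNat : Denumerable.ofNat Nat.Partrec.Code (Encodable.encode cd) = cd :=
      Denumerable.ofNat_encode cd
    have heval : cd.eval x = Part.some (if x ∈ ({x | x ∉ J} : Set ℕ) then 1 else 0) := by
      rw [hcd]
      by_cases h : x ∈ J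
      · have h' : x ∉ ({x | x ∉ J} : Set ℕ) := by simpa using h
        simp [h, h']
      · have h' : x ∈ ({x | x ∉ J} : Set ℕ) := by simpa using h
        simp [h, h']
    have hmem : x ∈ J ↔ cd.eval x = Part.some 1 := by
      constructor
      · rintro ⟨e', he', hev⟩
        have he : e' = Encodable.encode cd :=
          (nseq_strictMono L).injective (by rw [← he', hxdef])
        rw [he, hofNat] at hev
        exact hev
      · intro hev
        exact ⟨Encodable.encode cd, hxdef, by rw [hofNat]; exact hev⟩
    by_cases h : x ∈ J
    · have h1 : cd.eval x = Part.some 1 := hmem.1 h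
      have h0 : cd.eval x = Part.some 0 := by
        rw [heval]
        have : x ∉ ({x | x ∉ J} : Set ℕ) := by simpa using h
        simp [this]
      rw [h0] at h1
      exact absurd (Part.some_inj.1 h1) (by omega)
    · have h1 : cd.eval x = Part.some 1 := by
        rw [heval]
        have : x ∈ ({x | x ∉ J} : Set ℕ) := by simpa using h
        simp [this]
      exact h (hmem.2 h1)
  · -- subsequence meets everything
    intro X hX i
    set NE : ℕ → ℕ := fun e =>
      if h : ∃ m, nseq L e < L i (2 * m + 2) then Nat.find h else 0 with hNEdef
    set N := (Finset.range i).sup NE with hNdef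
    have hNbound : ∀ e < i, ∀ m, N < m →
        ¬(L i (2 * m) ≤ nseq L e ∧ nseq L e < L i (2 * m + 2)) := by
      rintro e he m hm ⟨ha, hb⟩
      have hex : ∃ m', nseq L e < L i (2 * m' + 2) := ⟨m, hb⟩
      have hfind : m ≤ Nat.find hex := (Nat.le_find_iff hex m).2 (fun m' hm' h' =>
        absurd h' (not_lt.2 (le_trans (hLmono i (by omega : 2 * m' + 2 ≤ 2 * m)) ha)))
      have hNe : NE e = Nat.find hex := by simp only [hNEdef, dif_pos hex]
      have hle : NE e ≤ N := Finset.le_sup (Finset.mem_range.2 he)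
      omega
    have hgood : ∀ m, N < m →
        (∀ x ∈ J, ¬(L i (2 * m) ≤ x ∧ x < L i (2 * m + 1))) ∨
        (∀ x ∈ J, ¬(L i (2 * m + 1) ≤ x ∧ x < L i (2 * m + 2))) := by
      intro m hm
      by_contra hc
      push_neg at hc
      obtain ⟨⟨x1, hx1J, hx1a, hx1b⟩, ⟨x2, hx2J, hx2a, hx2b⟩⟩ := hc
      obtain ⟨e1, he1, -⟩ := hx1J
      obtain ⟨e2, he2, -⟩ := hx2J
      subst he1; subst he2
      have hL12 : L i (2 * m) ≤ L i (2 * m + 1) := hLmono i (by omega)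
      have hL22 : L i (2 * m + 1) ≤ L i (2 * m + 2) := hLmono i (by omega)
      have he1i : i ≤ e1 := by
        by_contra h; push_neg at h
        exact hNbound e1 h m hm ⟨hx1a, lt_of_lt_of_le hx1b hL22⟩
      have he2i : i ≤ e2 := by
        by_contra h; push_neg at h
        exact hNbound e2 h m hm ⟨le_trans hL12 hx2a, hx2b⟩
      rcases Nat.lt_or_ge e1 e2 with h | h
      · have hb := nseq_bnd hLmono (le_trans he1i (le_of_lt h)) h
        rw [Bnd_eq (hLmono i) hx1a (lt_of_lt_of_le hx1b hL22)] at hb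
        omega
      · have hne : e1 ≠ e2 := fun hE => by
          rw [hE] at hx1b
          omega
        have h' : e2 < e1 := lt_of_le_of_ne h (Ne.symm hne)
        have hb := nseq_bnd hLmono (le_trans he2i (le_of_lt h')) h'
        rw [Bnd_eq (hLmono i) (le_trans hL12 hx2a) hx2b] at hb
        omega
    have main : ∀ q : ℕ,
        (∀ x, L i q ≤ x → x < L i (q + 1) → x ∉ J) →
        (∀ p (hp : p < (T i q).length), X (L i q + p) = (T i q)[p]) →
        MeetsSeq (subseqFun X {x | x ∉ J}) (D i) := by
      intro q hblock hagree
      set I' : Set ℕ := {x | x ∉ J} with hI'def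
      set d := (T i q).length with hddef
      set c := Nat.count (· ∈ I') (L i q) with hcdef
      have hLq1 : L i (q + 1) = L i q + d := (hsuit i).2.1 q
      have hmemI : ∀ p, p < d → (L i q + p) ∈ I' := fun p hp =>
        hblock _ (Nat.le_add_right _ _) (by omega)
      have hcount : ∀ p, p ≤ d → Nat.count (· ∈ I') (L i q + p) = c + p := by
        intro p hp
        induction p with
        | zero => simp [hcdef]
        | succ p ih =>
          have hmem : ((· ∈ I') (L i q + p)) := hmemI p (by omega)
          have h1 : Nat.count (· ∈ I') (L i q + p + 1)
              = Nat.count (· ∈ I') (L i q + p) + 1 := by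
            rw [Nat.count_succ, if_pos hmem]
          have h2 := ih (by omega)
          have h3 : L i q + (p + 1) = L i q + p + 1 := by omega
          rw [h3, h1, h2]
          omega
      have hnth : ∀ p, p < d → Nat.nth (· ∈ I') (c + p) = L i q + p := by
        intro p hp
        rw [← hcount p (le_of_lt hp)]
        exact Nat.nth_count (hmemI p hp)
      have hcle : c ≤ L i q := Nat.count_le _
      obtain ⟨σ', hσ'S, hpre⟩ := (hsuit i).2.2 (subseqFun X I') q c hcle
      have hlist : (List.range c).map (subseqFun X I') ++ T i q
          = (List.range (c + d)).map (subseqFun X I') := by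
        rw [List.range_add, List.map_append, List.map_map]
        congr 1
        apply List.ext_getElem
        · simp [hddef]
        · intro p h1 h2
          simp only [List.getElem_map, List.getElem_range, Function.comp]
          have hpd : p < d := by simpa [hddef] using h1
          show (T i q)[p] = X (Nat.nth (· ∈ I') (c + p))
          rw [hnth p hpd]
          exact (hagree p hpd).symm
      rw [hlist] at hpre
      have hσ'len : σ'.length ≤ c + d := by
        have := hpre.length_le
        simpa using this
      have hσ'eq : σ' = (List.range σ'.length).map (subseqFun X I') := by
        conv_lhs => rw [List.prefix_iff_eq_take.1 hpre]
        rw [← List.map_take, List.take_range, inf_eq_left.2 hσ'len]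
      exact ⟨σ'.length, by rw [← hσ'eq]; exact hσ'S⟩
    obtain ⟨j, hj⟩ := hT i N
    obtain ⟨k, hk⟩ := hX j
    rw [hj] at hk
    obtain ⟨σ, τ, ρ, m, hmN, hσlen, hτ, hρ, heq⟩ := hk
    subst hτ; subst hρ
    have hlen2 : (σ ++ T i (2 * m) ++ T i (2 * m + 1)).length = k := by
      rw [← heq]; simp
    have hlenA : (σ ++ T i (2 * m)).length = σ.length + (T i (2 * m)).length := by simp
    have hLm1 : L i (2 * m + 1) = L i (2 * m) + (T i (2 * m)).length := (hsuit i).2.1 (2 * m)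
    have hLm2 : L i (2 * m + 2) = L i (2 * m + 1) + (T i (2 * m + 1)).length :=
      (hsuit i).2.1 (2 * m + 1)
    have hklen : k = L i (2 * m) + (T i (2 * m)).length + (T i (2 * m + 1)).length := by
      have h := congrArg List.length heq
      simp [hσlen] at h
      omega
    have hXval : ∀ r, r < k → ∀ (h2 : r < (σ ++ T i (2 * m) ++ T i (2 * m + 1)).length),
        X r = (σ ++ T i (2 * m) ++ T i (2 * m + 1))[r] := by
      intro r hr h2
      have h1 : X r = ((List.range k).map X)[r]'(by simpa using hr) := by simp
      rw [h1]
      exact List.getElem_of_eq heq _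
    rcases hgood m hmN with hg | hg
    · apply main (2 * m)
      · intro x hxa hxb hxJ
        exact hg x hxJ ⟨hxa, hxb⟩
      · intro p hp
        have hr : L i (2 * m) + p < k := by omega
        rw [hXval _ hr (by rw [hlen2]; exact hr)]
        have hlt : L i (2 * m) + p < (σ ++ T i (2 * m)).length := by omega
        rw [List.getElem_append_left hlt,
          List.getElem_append_right (show σ.length ≤ L i (2 * m) + p by omega)]
        congr 1
        omega
    · apply main (2 * m + 1)
      · intro x hxa hxb hxJ
        exact hg x hxJ ⟨hxa, hxb⟩
      · intro p hp
        have hr : L i (2 * m + 1) + p < k := by omega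
        rw [hXval _ hr (by rw [hlen2]; exact hr)]
        have hge : (σ ++ T i (2 * m)).length ≤ L i (2 * m + 1) + p := by omega
        rw [List.getElem_append_right hge]
        congr 1
        omega
end

section
/- There exist uniformly partial computable sequences of functions (t_e) and (l_e) such that whenever W_e is a dense set of strings, t_e and l_e are total and suitable for W_e. -/
namespace USF

def decStr (n : ℕ) : List Bool := (Encodable.decode (α := List Bool) n).getD []

theorem decStr_encode (tl : List Bool) : decStr (Encodable.encode tl) = tl := by
  simp [decStr]

def dstep (e s : ℕ) (ρ : List Bool) : Bool :=
  (Nat.Partrec.Code.evaln s (Denumerable.ofNat Nat.Partrec.Code e) (Encodable.encode ρ)).isSome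

theorem dstep_mono {e s s' : ℕ} {ρ : List Bool} (h : s ≤ s') (hd : dstep e s ρ = true) :
    dstep e s' ρ = true := by
  rw [dstep, Option.isSome_iff_exists] at hd ⊢
  obtain ⟨x, hx⟩ := hd
  exact ⟨x, Nat.Partrec.Code.evaln_mono h hx⟩

def anyB {α : Type*} (l : List α) (p : α → Bool) : Bool :=
  l.foldr (fun a r => p a || r) false

def allB {α : Type*} (l : List α) (p : α → Bool) : Bool :=
  l.foldr (fun a r => p a && r) true

theorem anyB_cons {α : Type*} {a : α} {l : List α} {p : α → Bool} :
    anyB (a :: l) p = (p a || anyB l p) := rfl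

theorem allB_cons {α : Type*} {a : α} {l : List α} {p : α → Bool} :
    allB (a :: l) p = (p a && allB l p) := rfl

theorem anyB_eq_true {α : Type*} {l : List α} {p : α → Bool} :
    anyB l p = true ↔ ∃ a ∈ l, p a = true := by
  induction l with
  | nil => simp [anyB]
  | cons a l ih => rw [anyB_cons]; simp [ih]

theorem allB_eq_true {α : Type*} {l : List α} {p : α → Bool} :
    allB l p = true ↔ ∀ a ∈ l, p a = true := by
  induction l with
  | nil => simp [allB]
  | cons a l ih => rw [allB_cons]; simp [ih]

def takeP (σ : List Bool) (m : ℕ) : List Bool :=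
  (List.range m).filterMap (fun k => σ[k]?)

theorem takeP_eq (σ : List Bool) (m : ℕ) : takeP σ m = σ.take m := by
  induction m with
  | zero => simp [takeP]
  | succ m ih =>
    rw [takeP, List.range_succ, List.filterMap_append, List.take_succ, ← takeP, ih]
    cases h : σ[m]? <;> simp [List.filterMap, h]

def okStr (e s : ℕ) (σ : List Bool) : Bool :=
  anyB (List.range (σ.length + 1)) (fun m => dstep e s (takeP σ m))

def allStr : ℕ → List (List Bool) := fun L =>
  Nat.rec [[]] (fun _ acc => [] :: acc.flatMap fun σ => [false :: σ, true :: σ]) L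

theorem mem_allStr {L : ℕ} {σ : List Bool} : σ ∈ allStr L ↔ σ.length ≤ L := by
  induction L generalizing σ with
  | zero => simp [allStr, List.length_eq_zero_iff]
  | succ L ih =>
    show σ ∈ [] :: _ ↔ _
    cases σ with
    | nil => simp
    | cons b τ =>
      simp only [List.mem_cons, List.mem_flatMap]
      constructor
      · rintro (h | ⟨τ', hτ', h⟩)
        · simp at h
        · simp at h
          rcases h with h | h <;> rw [h.2] <;>
            simpa using Nat.succ_le_succ (ih.mp hτ')
      · intro h
        right
        refine ⟨τ, ih.mpr (Nat.le_of_succ_le_succ (by simpa using h)), ?_⟩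
        cases b <;> simp

def goodT (e L s : ℕ) (tl : List Bool) : Bool :=
  allB (allStr L) (fun σ => okStr e s (σ ++ tl))

def goodN (e L k : ℕ) : Bool := goodT e L k.unpair.2 (decStr k.unpair.1)

def findB (l : List ℕ) (p : ℕ → Bool) : Option ℕ :=
  l.foldr (fun k r => bif p k then some k else r) none

theorem findB_append (l₁ l₂ : List ℕ) (p : ℕ → Bool) :
    findB (l₁ ++ l₂) p = (findB l₁ p).or (findB l₂ p) := by
  induction l₁ with
  | nil => simp [findB]
  | cons a l ih =>
    simp only [findB, List.cons_append, List.foldr_cons] at ih ⊢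
    cases p a <;> simp [ih]

theorem findB_some_spec {l : List ℕ} {p : ℕ → Bool} {k : ℕ}
    (h : findB l p = some k) : p k = true := by
  induction l with
  | nil => simp [findB] at h
  | cons a l ih =>
    simp only [findB, List.foldr_cons] at h
    cases ha : p a <;> rw [ha] at h
    · exact ih h
    · simp at h; rw [← h]; exact ha

theorem findB_range_mono {p : ℕ → Bool} {s s' k : ℕ} (h : s ≤ s')
    (hk : findB (List.range s) p = some k) : findB (List.range s') p = some k := by
  obtain ⟨d, rfl⟩ := Nat.exists_eq_add_of_le h
  rw [List.range_add, findB_append, hk]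
  rfl

theorem findB_range_isSome (p : ℕ → Bool) (k : ℕ) (hp : p k = true) :
    ∀ s, k < s → (findB (List.range s) p).isSome := by
  intro s
  induction s with
  | zero => omega
  | succ s ih =>
    intro h
    rw [List.range_succ, findB_append]
    cases hf : findB (List.range s) p with
    | some j => simp
    | none =>
      rcases Nat.lt_succ_iff_lt_or_eq.mp h with h' | rfl
      · have := ih h'; rw [hf] at this; simp at this
      · simp [findB, hp]

def srch (e L s : ℕ) : Option ℕ := findB (List.range s) (goodN e L)

def Gstep (e s : ℕ) (o : Option ℕ) : Option ℕ :=
  o.bind fun L => (srch e L s).map fun k => L + (decStr k.unpair.1).length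

def G (e s : ℕ) : ℕ → Option ℕ := fun n =>
  Nat.rec (some 0) (fun _ IH => Gstep e s IH) n

theorem G_zero (e s : ℕ) : G e s 0 = some 0 := rfl

theorem G_succ (e s n : ℕ) : G e s (n + 1) = Gstep e s (G e s n) := rfl

def TT (e s n : ℕ) : Option (List Bool) :=
  (G e s n).bind fun L => (srch e L s).map fun k => decStr k.unpair.1

theorem srch_mono {e L s s' k : ℕ} (h : s ≤ s') (hk : srch e L s = some k) :
    srch e L s' = some k := findB_range_mono h hk

theorem G_mono {e s s' n L : ℕ} (h : s ≤ s') (hG : G e s n = some L) :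
    G e s' n = some L := by
  induction n generalizing L with
  | zero => exact hG
  | succ n ih =>
    rw [G_succ] at hG ⊢
    rcases hb : G e s n with _ | L₀
    · rw [hb] at hG; simp [Gstep] at hG
    · rw [hb] at hG
      rw [ih hb]
      simp only [Gstep, Option.bind_some] at hG ⊢
      rcases hs : srch e L₀ s with _ | k
      · rw [hs] at hG; simp at hG
      · rw [hs] at hG; rw [srch_mono h hs]; exact hG

theorem TT_mono {e s s' n : ℕ} {tl : List Bool} (h : s ≤ s') (hT : TT e s n = some tl) :
    TT e s' n = some tl := by
  simp only [TT] at hT ⊢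
  rcases hb : G e s n with _ | L
  · rw [hb] at hT; simp at hT
  · rw [hb] at hT; rw [G_mono h hb]
    simp only [Option.bind_some] at hT ⊢
    rcases hs : srch e L s with _ | k
    · rw [hs] at hT; simp at hT
    · rw [hs] at hT; rw [srch_mono h hs]; exact hT


theorem dstep_mem {e s : ℕ} {ρ : List Bool} (h : dstep e s ρ = true) : ρ ∈ ceSet e := by
  rw [dstep, Option.isSome_iff_exists] at h
  obtain ⟨x, hx⟩ := h
  exact Part.dom_iff_mem.mpr ⟨x, Nat.Partrec.Code.evaln_sound hx⟩

theorem mem_dstep {e : ℕ} {ρ : List Bool} (h : ρ ∈ ceSet e) : ∃ s, dstep e s ρ = true := by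
  obtain ⟨x, hx⟩ := Part.dom_iff_mem.mp h
  obtain ⟨s, hs⟩ := Nat.Partrec.Code.evaln_complete.mp hx
  exact ⟨s, Option.isSome_iff_exists.mpr ⟨x, hs⟩⟩

theorem okStr_spec {e s : ℕ} {σ : List Bool} (h : okStr e s σ = true) :
    MeetsStr σ (ceSet e) := by
  obtain ⟨m, _, hd⟩ := anyB_eq_true.mp h
  rw [takeP_eq] at hd
  exact ⟨σ.take m, dstep_mem hd, List.take_prefix m σ⟩

theorem exists_ok (e : ℕ) (hd : DenseStrings (ceSet e)) (lst : List (List Bool)) :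
    ∃ (tl : List Bool) (s : ℕ), ∀ σ ∈ lst, okStr e s (σ ++ tl) = true := by
  induction lst with
  | nil => exact ⟨[], 0, by simp⟩
  | cons σ lst ih =>
    obtain ⟨tl, s, h⟩ := ih
    obtain ⟨ρ, hρ, u, hu⟩ := hd (σ ++ tl)
    obtain ⟨s₁, hs₁⟩ := mem_dstep hρ
    refine ⟨tl ++ u, max s s₁, ?_⟩
    intro τ hτ
    rcases List.mem_cons.mp hτ with rfl | hτ
    · apply anyB_eq_true.mpr
      refine ⟨(τ ++ (tl ++ u)).length, by simp, ?_⟩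
      rw [takeP_eq, List.take_length]
      have hρ' : τ ++ (tl ++ u) = ρ := by rw [← List.append_assoc]; exact hu
      rw [hρ']
      exact dstep_mono (le_max_right _ _) hs₁
    · obtain ⟨m, hm, hdm⟩ := anyB_eq_true.mp (h τ hτ)
      have hmle : m ≤ (τ ++ tl).length := Nat.lt_succ_iff.mp (List.mem_range.mp hm)
      apply anyB_eq_true.mpr
      refine ⟨m, List.mem_range.mpr (Nat.lt_succ_iff.mpr (by simp at hmle ⊢; omega)), ?_⟩
      rw [takeP_eq] at hdm ⊢
      rw [← List.append_assoc, List.take_append_of_le_length hmle]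
      exact dstep_mono (le_max_left _ _) hdm

theorem exists_good (e : ℕ) (hd : DenseStrings (ceSet e)) (L : ℕ) :
    ∃ k, goodN e L k = true := by
  obtain ⟨tl, s, h⟩ := exists_ok e hd (allStr L)
  refine ⟨Nat.pair (Encodable.encode tl) s, ?_⟩
  simp only [goodN, Nat.unpair_pair, decStr_encode]
  exact allB_eq_true.mpr fun σ hσ => h σ hσ

theorem srch_isSome (e L : ℕ) (hex : ∃ k, goodN e L k = true) :
    ∃ s k, srch e L s = some k := by
  obtain ⟨k, hk⟩ := hex
  obtain ⟨j, hj⟩ := Option.isSome_iff_exists.mp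
    (findB_range_isSome (goodN e L) k hk (k + 1) (Nat.lt_succ_self k))
  exact ⟨k + 1, j, hj⟩

theorem G_total (e : ℕ) (hd : DenseStrings (ceSet e)) : ∀ n, ∃ s L, G e s n = some L := by
  intro n
  induction n with
  | zero => exact ⟨0, 0, rfl⟩
  | succ n ih =>
    obtain ⟨s, L, hG⟩ := ih
    obtain ⟨s₁, k, hk⟩ := srch_isSome e L (exists_good e hd L)
    refine ⟨max s s₁, L + (decStr k.unpair.1).length, ?_⟩
    rw [G_succ, G_mono (le_max_left _ _) hG, Gstep, Option.bind_some,
      srch_mono (le_max_right _ _) hk]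
    rfl

theorem TT_total (e : ℕ) (hd : DenseStrings (ceSet e)) (n : ℕ) :
    ∃ tl s, TT e s n = some tl := by
  obtain ⟨s, L, hG⟩ := G_total e hd n
  obtain ⟨s₁, k, hk⟩ := srch_isSome e L (exists_good e hd L)
  refine ⟨decStr k.unpair.1, max s s₁, ?_⟩
  rw [TT, G_mono (le_max_left _ _) hG, Option.bind_some, srch_mono (le_max_right _ _) hk]
  rfl

theorem main_props (e : ℕ) (hd : DenseStrings (ceSet e)) :
    ∃ (T : ℕ → List Bool) (L : ℕ → ℕ),
      (∀ n, (∃ s, TT e s n = some (T n)) ∧ (∃ s, G e s n = some (L n))) ∧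
      SuitableFor (ceSet e) L T := by
  have hT : ∀ n, ∃ tl s, TT e s n = some tl := TT_total e hd
  have hL : ∀ n, ∃ L s, G e s n = some L := by
    intro n; obtain ⟨s, L, h⟩ := G_total e hd n; exact ⟨L, s, h⟩
  set T : ℕ → List Bool := fun n => (hT n).choose with hTdef
  set L : ℕ → ℕ := fun n => (hL n).choose with hLdef
  have hTs : ∀ n, ∃ s, TT e s n = some (T n) := fun n => (hT n).choose_spec
  have hLs : ∀ n, ∃ s, G e s n = some (L n) := fun n => (hL n).choose_spec
  have key : ∀ n, ∃ k, goodN e (L n) k = true ∧ T n = decStr k.unpair.1 ∧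
      L (n + 1) = L n + (T n).length := by
    intro n
    obtain ⟨s₀, h₀⟩ := hLs n
    obtain ⟨s₁, h₁⟩ := hTs n
    obtain ⟨s₂, h₂⟩ := hLs (n + 1)
    set s := max (max s₀ s₁) s₂ with hs
    have hG : G e s n = some (L n) :=
      G_mono (le_trans (le_max_left _ _) (le_max_left _ _)) h₀
    have hTT : TT e s n = some (T n) :=
      TT_mono (le_trans (le_max_right _ _) (le_max_left _ _)) h₁
    have hG' : G e s (n + 1) = some (L (n + 1)) := G_mono (le_max_right _ _) h₂
    rw [TT, hG, Option.bind_some] at hTT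
    rcases hk : srch e (L n) s with _ | k
    · rw [hk] at hTT; simp at hTT
    · rw [hk] at hTT
      have hTn : T n = decStr k.unpair.1 := by
        simpa using hTT.symm
      rw [G_succ, hG, Gstep, Option.bind_some, hk] at hG'
      refine ⟨k, findB_some_spec hk, hTn, ?_⟩
      have : L n + (decStr k.unpair.1).length = L (n + 1) := by simpa using hG'
      rw [hTn, ← this]
  refine ⟨T, L, fun n => ⟨hTs n, hLs n⟩, ?_, ?_, ?_⟩
  · obtain ⟨s, h⟩ := hLs 0
    rw [G_zero] at h
    exact (Option.some.inj h).symm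
  · intro n; exact (key n).choose_spec.2.2
  · intro X n m hm
    obtain ⟨k, hgood, hTn, _⟩ := key n
    have hσ : ((List.range m).map X) ∈ allStr (L n) := mem_allStr.mpr (by simpa using hm)
    rw [goodN, goodT] at hgood
    have hok := allB_eq_true.mp hgood _ hσ
    rw [← hTn] at hok
    exact okStr_spec hok

open Primrec in
theorem primrec_or : Primrec₂ (· || · : Bool → Bool → Bool) :=
  (Primrec.cond .fst (const true) .snd).of_eq fun p => by cases p.1 <;> rfl

open Primrec in
theorem primrec_and : Primrec₂ (· && · : Bool → Bool → Bool) :=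
  (Primrec.cond .fst .snd (const false)).of_eq fun p => by cases p.1 <;> rfl

open Primrec in
theorem primrec_decStr : Primrec decStr :=
  option_getD.comp .decode (const [])

open Primrec in
theorem primrec_dstep : Primrec fun q : (ℕ × ℕ) × List Bool => dstep q.1.1 q.1.2 q.2 :=
  option_isSome.comp (Nat.Partrec.Code.primrec_evaln.comp
    (((snd.comp fst).pair ((Primrec.ofNat _).comp (fst.comp fst))).pair
      (Primrec.encode.comp snd)))

open Primrec in
theorem primrec_takeP : Primrec₂ takeP :=
  Primrec.to₂ <| listFilterMap (list_range.comp snd)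
    ((list_getElem?.comp (fst.comp fst) snd).to₂)

open Primrec in
theorem primrec_okStr : Primrec fun q : (ℕ × ℕ) × List Bool => okStr q.1.1 q.1.2 q.2 :=
  (list_foldr (list_range.comp (succ.comp (list_length.comp snd))) (const false)
    ((primrec_or.comp
      (primrec_dstep.comp ((fst.comp fst).pair
        (primrec_takeP.comp (snd.comp fst) (fst.comp snd))))
      (snd.comp snd)).to₂)).of_eq fun q => rfl

open Primrec in
theorem primrec_allStr : Primrec allStr :=
  Primrec.nat_rec₁ [[]]
    ((list_cons.comp (const ([] : List Bool))
      (list_flatMap snd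
        ((list_cons.comp (list_cons.comp (const false) snd)
          (list_cons.comp (list_cons.comp (const true) snd) (const []))).to₂))).to₂)

open Primrec in
theorem primrec_goodT :
    Primrec fun q : ((ℕ × ℕ) × ℕ) × List Bool => goodT q.1.1.1 q.1.1.2 q.1.2 q.2 :=
  (list_foldr (primrec_allStr.comp (snd.comp (fst.comp fst))) (const true)
    ((primrec_and.comp
      (primrec_okStr.comp
        (((fst.comp (fst.comp (fst.comp fst))).pair (snd.comp (fst.comp fst))).pair
          (list_append.comp (fst.comp snd) (snd.comp fst))))
      (snd.comp snd)).to₂)).of_eq fun q => rfl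

open Primrec in
theorem primrec_goodN : Primrec fun q : (ℕ × ℕ) × ℕ => goodN q.1.1 q.1.2 q.2 :=
  primrec_goodT.comp
    ((((fst.comp fst).pair (snd.comp fst)).pair
      (snd.comp (unpair.comp snd))).pair
      (primrec_decStr.comp (fst.comp (unpair.comp snd))))

open Primrec in
theorem primrec_srch : Primrec fun q : (ℕ × ℕ) × ℕ => srch q.1.1 q.1.2 q.2 :=
  (list_foldr (list_range.comp snd) (const none)
    ((Primrec.cond
      (primrec_goodN.comp ((fst.comp fst).pair (fst.comp snd)))
      (option_some.comp (fst.comp snd))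
      (snd.comp snd)).to₂)).of_eq fun q => rfl

open Primrec in
theorem primrec_G : Primrec fun q : (ℕ × ℕ) × ℕ => G q.1.1 q.1.2 q.2 :=
  (nat_rec' snd (const (some 0))
    ((option_bind (snd.comp snd)
      ((option_map
        (primrec_srch.comp
          (((fst.comp (fst.comp (fst.comp fst))).pair snd).pair
            (snd.comp (fst.comp (fst.comp fst)))))
        ((nat_add.comp (snd.comp fst)
          (list_length.comp (primrec_decStr.comp (fst.comp (unpair.comp snd))))).to₂)).to₂)).to₂)).of_eq
    fun q => rfl

open Primrec in
theorem primrec_TT : Primrec fun q : (ℕ × ℕ) × ℕ => TT q.1.1 q.1.2 q.2 :=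
  option_bind primrec_G
    ((option_map
      (primrec_srch.comp
        (((fst.comp (fst.comp fst)).pair snd).pair (snd.comp (fst.comp fst))))
      ((primrec_decStr.comp (fst.comp (unpair.comp snd))).to₂)).to₂)

end USF

theorem exists_uniform_suitable_functions :
    ∃ (t : ℕ → ℕ →. List Bool) (l : ℕ → ℕ →. ℕ),
      Partrec₂ t ∧ Partrec₂ l ∧
      ∀ e, DenseStrings (ceSet e) →
        ∃ (T : ℕ → List Bool) (L : ℕ → ℕ),
          (∀ n, t e n = Part.some (T n) ∧ l e n = Part.some (L n)) ∧
          SuitableFor (ceSet e) L T := by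
  
  refine ⟨fun e n => Nat.rfindOpt fun s => USF.TT e s n,
    fun e n => Nat.rfindOpt fun s => USF.G e s n, ?_, ?_, ?_⟩
  · exact Partrec.rfindOpt
      ((USF.primrec_TT.comp
        (((Primrec.fst.comp .fst).pair .snd).pair (Primrec.snd.comp .fst))).to_comp)
  · exact Partrec.rfindOpt
      ((USF.primrec_G.comp
        (((Primrec.fst.comp .fst).pair .snd).pair (Primrec.snd.comp .fst))).to_comp)
  · intro e hd
    obtain ⟨T, L, hst, hsuit⟩ := USF.main_props e hd
    refine ⟨T, L, fun n => ⟨?_, ?_⟩, hsuit⟩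
    · exact Part.eq_some_iff.mpr
        ((Nat.rfindOpt_mono (fun h hm => USF.TT_mono h hm)).mpr (hst n).1)
    · exact Part.eq_some_iff.mpr
        ((Nat.rfindOpt_mono (fun h hm => USF.G_mono h hm)).mpr (hst n).2)
end
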